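/- arXiv:2403.18498 — 5 statements merged into one kernel-verified Lean document; each statement's English description precedes it below -/
import Mathlib

section
/- Let R be a reduced commutative ring that is finitely generated as a ℤ-algebra, with dimension homomorphism α : R → ℤ and regular element r ∈ R. Then there exists a finite subset S ⊆ R such that for every x ∈ R, the ideal {n ∈ ℤ : n·r ∈ (x)} of ℤ is generated (as an ideal of ℤ) by the set {m ∈ ℤ : ∃ s ∈ S with s·x = m·r}; equivalently K_r(x) = K_r^S(x) for all x ∈ R. -/
/-- Let `R` be a reduced commutative ring, finitely generated as a
`ℤ`-algebra, with dimension homomorphism `α : R → ℤ` and regular element `r ∈ R`.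
Then there is a finite subset `S ⊆ R` such that for all `x ∈ R` the ideal
`{n : ℤ | n • r ∈ (x)}` of `ℤ` is generated by `{m : ℤ | ∃ s ∈ S, s * x = m • r}`;
equivalently `K_r(x) = K_r^S(x)` for all `x ∈ R`. -/
theorem exists_finite_inverse_set {R : Type*} [CommRing R] [IsReduced R]
    [Algebra.FiniteType ℤ R]
    (α : R →+* ℤ) (r : R) (hr : α r ≠ 0) (hreg : ∀ y : R, y * r = α y • r) :
    ∃ S : Finset R, ∀ x : R, ∀ n : ℤ,
      n • r ∈ Ideal.span ({x} : Set R) ↔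
        n ∈ Ideal.span {m : ℤ | ∃ s ∈ S, s * x = m • r} := by
  classical
  have hNoeth : IsNoetherianRing R := Algebra.FiniteType.isNoetherianRing ℤ R
  set a : ℤ := α r with ha_def
  -- α is surjective
  have hαsurj : Function.Surjective α := by
    intro n
    refine ⟨n • 1, ?_⟩
    rw [map_zsmul, map_one, smul_eq_mul, mul_one]
  -- key vanishing lemma: if α z = 0 and z lies in every minimal prime containing r, z = 0
  have hzero : ∀ z : R, α z = 0 → (∀ p ∈ minimalPrimes R, r ∈ p → z ∈ p) → z = 0 := by
    intro z hz hzp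
    have hnil : z ∈ nilradical R := by
      rw [nilradical, Ideal.radical_eq_sInf]
      refine Submodule.mem_sInf.mpr ?_
      rintro p ⟨-, hp⟩
      haveI := hp
      obtain ⟨q, hq, hqp⟩ := Ideal.exists_minimalPrimes_le (I := (⊥ : Ideal R)) (J := p) bot_le
      haveI hqprime : q.IsPrime := hq.1.1
      apply hqp
      by_cases hrq : r ∈ q
      · exact hzp q hq hrq
      · have hzr : z * r ∈ q := by
          rw [hreg z, hz, zero_smul]
          exact q.zero_mem
        exact (hqprime.mem_or_mem hzr).resolve_right hrq
    have : IsNilpotent z := mem_nilradical.mp hnil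
    exact this.eq_zero
  -- key equivalence: producing equalities y * x = m • r
  have hkey : ∀ (y x : R) (m : ℤ),
      (∀ p ∈ minimalPrimes R, r ∈ p → y * x ∈ p) → α y * α x = m * a → y * x = m • r := by
    intro y x m hJ hα
    have h1 : y * x - m • r = 0 := by
      apply hzero
      · rw [map_sub, map_mul, map_zsmul, smul_eq_mul, hα, sub_self]
      · intro p hp hrp
        refine Ideal.sub_mem _ (hJ p hp hrp) ?_
        exact Submodule.smul_of_tower_mem p m hrp
    exact sub_eq_zero.mp h1
  -- choose generator data for each family of primes
  have hgen : ∀ T : Set (Ideal R), ∃ y : R, y ∈ sInf T ∧ ∀ z ∈ sInf T, α y ∣ α z := by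
    intro T
    obtain ⟨y, hy, hyα⟩ := (Ideal.mem_map_iff_of_surjective α hαsurj).mp
      (Submodule.IsPrincipal.generator_mem (Ideal.map α (sInf T)))
    refine ⟨y, hy, fun z hz => ?_⟩
    rw [hyα]
    refine Ideal.mem_span_singleton.mp ?_
    rw [Ideal.span_singleton_generator]
    exact Ideal.mem_map_of_mem α hz
  choose yT hyT hydvd using hgen
  -- the finite set S
  have hM₀ : {p : Ideal R | p ∈ minimalPrimes R ∧ r ∈ p}.Finite :=
    (minimalPrimes.finite_of_isNoetherianRing R).subset (fun p hp => hp.1)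
  have hdvd_fin : {d : ℤ | d ∣ a}.Finite := by
    refine (Set.finite_Icc (-|a|) |a|).subset ?_
    intro d hd
    have h1 : |d| ≤ |a| :=
      Int.le_of_dvd (abs_pos.mpr hr) ((abs_dvd_abs d a).mpr hd)
    exact Set.mem_Icc.mpr (abs_le.mp h1)
  have hSfin : ((fun Td : Set (Ideal R) × ℤ => Td.2 • yT Td.1) ''
      ({T | T ⊆ {p : Ideal R | p ∈ minimalPrimes R ∧ r ∈ p}} ×ˢ {d : ℤ | d ∣ a})).Finite :=
    Set.Finite.image _ ((hM₀.finite_subsets).prod hdvd_fin)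
  refine ⟨hSfin.toFinset, ?_⟩
  intro x n
  constructor
  · -- hard direction
    intro hn
    obtain ⟨y, hy⟩ := Ideal.mem_span_singleton'.mp hn
    set T : Set (Ideal R) := {p : Ideal R | p ∈ minimalPrimes R ∧ r ∈ p ∧ x ∉ p} with hT_def
    have hTsub : T ⊆ {p : Ideal R | p ∈ minimalPrimes R ∧ r ∈ p} :=
      fun p hp => ⟨hp.1, hp.2.1⟩
    -- y lies in sInf T
    have hymem : y ∈ sInf T := by
      refine Submodule.mem_sInf.mpr ?_
      rintro p ⟨hp, hrp, hxp⟩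
      haveI hpP : Ideal.IsPrime p := hp.1.1
      have hin : y * x ∈ p := by
        rw [hy]
        exact Submodule.smul_of_tower_mem p n hrp
      exact (hpP.mem_or_mem hin).resolve_right hxp
    set b : ℤ := α (yT T) with hb_def
    obtain ⟨e, he⟩ : b ∣ α y := hydvd T y hymem
    -- numeric identity
    have hna : α y * α x = n * a := by
      have := congrArg α hy
      rw [map_mul, map_zsmul, smul_eq_mul] at this
      exact this
    -- gcd data
    set B : ℤ := b * α x with hB_def
    set g : ℤ := (Int.gcd B a : ℤ) with hg_def
    have hgne : g ≠ 0 := by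
      simp only [hg_def, ne_eq, Int.natCast_eq_zero]
      rw [Int.gcd_eq_zero_iff]
      exact fun h => hr h.2
    obtain ⟨w, hw⟩ : g ∣ B := Int.gcd_dvd_left B a
    obtain ⟨a', ha'⟩ : g ∣ a := Int.gcd_dvd_right B a
    -- the witness element
    set s₁ : R := a' • yT T with hs₁_def
    have hs₁S : s₁ ∈ hSfin.toFinset := by
      rw [Set.Finite.mem_toFinset]
      exact ⟨(T, a'), ⟨hTsub, ⟨g, by rw [ha', mul_comm]⟩⟩, rfl⟩
    have hs₁x : s₁ * x = w • r := by
      apply hkey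
      · intro p hp hrp
        rw [hs₁_def, smul_mul_assoc]
        refine Submodule.smul_of_tower_mem p a' ?_
        by_cases hxp : x ∈ p
        · exact Ideal.mul_mem_left p _ hxp
        · refine Ideal.mul_mem_right x p ?_
          exact Submodule.mem_sInf.mp (hyT T) p ⟨hp, hrp, hxp⟩
      · rw [hs₁_def, map_zsmul, smul_eq_mul]
        calc a' * b * α x = a' * B := by rw [hB_def, mul_assoc]
          _ = a' * (g * w) := by rw [hw]
          _ = (g * a') * w := by ring
          _ = w * a := by rw [← ha']; ring
    -- w divides n
    have hwn : w ∣ n := by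
      have hbez : g = B * Int.gcdA B a + a * Int.gcdB B a := Int.gcd_eq_gcd_ab B a
      have hcalc : n * g = ((n * Int.gcdA B a + e * Int.gcdB B a) * w) * g := by
        calc n * g = n * B * Int.gcdA B a + (n * a) * Int.gcdB B a := by rw [hbez]; ring
          _ = n * B * Int.gcdA B a + (α y * α x) * Int.gcdB B a := by rw [hna]
          _ = n * B * Int.gcdA B a + e * B * Int.gcdB B a := by
              rw [he, hB_def]; ring
          _ = ((n * Int.gcdA B a + e * Int.gcdB B a) * w) * g := by
              rw [hw]; ring
      have h2 := mul_right_cancel₀ hgne hcalc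
      exact ⟨n * Int.gcdA B a + e * Int.gcdB B a, h2.trans (mul_comm _ _)⟩
    obtain ⟨k, hk⟩ := hwn
    rw [hk, mul_comm]
    refine Ideal.mul_mem_left _ k (Ideal.subset_span ?_)
    exact ⟨s₁, hs₁S, hs₁x⟩
  · -- easy direction
    intro hn
    have hle : Ideal.span {m : ℤ | ∃ s ∈ hSfin.toFinset, s * x = m • r} ≤
        Submodule.comap (LinearMap.toSpanSingleton ℤ R r)
          (Submodule.restrictScalars ℤ (Ideal.span ({x} : Set R))) := by
      rw [Ideal.span_le]
      rintro m ⟨s, _, hs⟩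
      show m • r ∈ Ideal.span ({x} : Set R)
      rw [← hs]
      exact Ideal.mem_span_singleton'.mpr ⟨s, rfl⟩
    exact hle hn
end

section
/- Let G be a finite group and N a normal subgroup of G. If N has a complement in G (i.e. the extension 1 → N → G → G/N → 1 splits), then for every prime p and every Sylow p-subgroup P of G, N∩P has a complement in P. -/
open scoped Pointwise


/-- Let `G` be a finite group and `N ⊴ G`. If `N` has a complement
in `G` (the extension `1 → N → G → G/N → 1` splits), then for every prime `p` and
every Sylow `p`-subgroup `P` of `G`, `N ∩ P` has a complement in `P`. -/
theorem sylow_complements_of_complement {G : Type*} [Group G] [Finite G]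
    (N : Subgroup G) [N.Normal]
    (h : ∃ H : Subgroup G, H ⊓ N = ⊥ ∧ Nat.card H * Nat.card N = Nat.card G) :
    ∀ p : ℕ, p.Prime → ∀ P : Sylow p G,
      ∃ K : Subgroup G, K ≤ (P : Subgroup G) ∧ K ⊓ N = ⊥ ∧
        Nat.card K * Nat.card (N ⊓ (P : Subgroup G) : Subgroup G) =
          Nat.card (P : Subgroup G) := by
  obtain ⟨H, hHN, hcard⟩ := h
  intro p hp P
  haveI : Fact p.Prime := ⟨hp⟩
  -- pick a Sylow p-subgroup of H and conjugate it into P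
  obtain ⟨Q⟩ : Nonempty (Sylow p H) := inferInstance
  set Q' : Subgroup G := (Q : Subgroup H).map H.subtype with hQ'def
  have hQ'H : Q' ≤ H := Subgroup.map_subtype_le _
  have hQ'p : IsPGroup p Q' := Q.2.map H.subtype
  obtain ⟨P', hle⟩ := hQ'p.exists_le_sylow
  obtain ⟨g, hg⟩ := MulAction.exists_smul_eq G P' P
  set c : G ≃* G := MulAut.conj g with hcdef
  set K : Subgroup G := Q'.map c.toMonoidHom with hKdef
  have hcinj : Function.Injective (c.toMonoidHom : G →* G) := c.injective
  have hsmul : ∀ T : Subgroup G, MulAut.conj g • T = T.map c.toMonoidHom := fun T => rfl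
  have hKP : K ≤ (P : Subgroup G) := by
    have : ((g • P' : Sylow p G) : Subgroup G) = (P' : Subgroup G).map c.toMonoidHom := by
      rw [Sylow.coe_subgroup_smul, hsmul]
    rw [hKdef, ← hg, this]
    exact Subgroup.map_mono hle
  have hKN : K ⊓ N = ⊥ := by
    have hNmap : N.map c.toMonoidHom = N := by
      rw [← hsmul]; exact Subgroup.Normal.conj_smul_eq_self g N
    have : K ⊓ N = (Q' ⊓ N).map c.toMonoidHom := by
      rw [Subgroup.map_inf _ _ _ hcinj, hNmap]
    rw [this]
    have h1 : Q' ⊓ N = ⊥ := le_bot_iff.mp (hHN ▸ inf_le_inf_right N hQ'H)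
    rw [h1, Subgroup.map_bot]
  -- cardinalities
  have hKcard : Nat.card K = p ^ (Nat.card H).factorization p := by
    have e1 : Nat.card K = Nat.card Q' :=
      (Nat.card_congr (Q'.equivMapOfInjective c.toMonoidHom hcinj).toEquiv).symm
    have e2 : Nat.card Q' = Nat.card (Q : Subgroup H) :=
      (Nat.card_congr ((Q : Subgroup H).equivMapOfInjective H.subtype
        H.subtype_injective).toEquiv).symm
    rw [e1, e2, Q.card_eq_multiplicity]
  -- the quotient map
  set φ : G →* G ⧸ N := QuotientGroup.mk' N with hφdef
  set ψ : (P : Subgroup G) →* G ⧸ N := φ.comp (P : Subgroup G).subtype with hψdef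
  have hψker : ψ.ker = (N ⊓ (P : Subgroup G)).subgroupOf (P : Subgroup G) := by
    rw [hψdef, ← MonoidHom.comap_ker, QuotientGroup.ker_mk',
      Subgroup.inf_subgroupOf_right]
    rfl
  have hkercard : Nat.card ψ.ker = Nat.card (N ⊓ (P : Subgroup G) : Subgroup G) := by
    rw [hψker]
    exact Nat.card_congr (Subgroup.subgroupOfEquivOfLe inf_le_right).toEquiv
  have hPsplit : Nat.card (P : Subgroup G) =
      Nat.card ψ.range * Nat.card (N ⊓ (P : Subgroup G) : Subgroup G) := by
    rw [← hkercard, Subgroup.card_eq_card_quotient_mul_card_subgroup ψ.ker,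
      Nat.card_congr (QuotientGroup.quotientKerEquivRange ψ).toEquiv]
  have hψrange : ψ.range = (P : Subgroup G).map φ := by
    rw [hψdef, MonoidHom.range_comp, Subgroup.range_subtype]
  -- Nat.card ψ.range = Nat.card K
  have hHquot : Nat.card (G ⧸ N) = Nat.card H := by
    have := Subgroup.card_eq_card_quotient_mul_card_subgroup (α := G) N
    have hN0 : Nat.card N ≠ 0 := Nat.card_pos.ne'
    exact Nat.eq_of_mul_eq_mul_right (Nat.pos_of_ne_zero hN0)
      (by rw [← this, ← hcard])
  have hdvd1 : Nat.card ψ.range ∣ Nat.card K := by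
    have hpr : IsPGroup p ψ.range := by
      rw [hψrange]; exact P.2.map φ
    obtain ⟨n, hn⟩ := hpr.exists_card_eq
    have hd : (p : ℕ) ^ n ∣ Nat.card H := by
      rw [← hn, ← hHquot]; exact Subgroup.card_subgroup_dvd_card _
    have hH0 : Nat.card H ≠ 0 := Nat.card_pos.ne'
    rw [hn, hKcard]
    exact pow_dvd_pow p ((Nat.Prime.pow_dvd_iff_le_factorization hp hH0).mp hd)
  have hdvd2 : Nat.card K ∣ Nat.card ψ.range := by
    set χ : K →* G ⧸ N := φ.comp K.subtype with hχdef
    have hχker : χ.ker = ⊥ := by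
      rw [hχdef, ← MonoidHom.comap_ker, QuotientGroup.ker_mk']
      rw [show N.comap K.subtype = N.subgroupOf K from rfl,
        ← Subgroup.inf_subgroupOf_left N K, hKN, Subgroup.bot_subgroupOf]
    have hχinj : Function.Injective χ := (MonoidHom.ker_eq_bot_iff χ).mp hχker
    have e1 : Nat.card K = Nat.card χ.range := by
      rw [Nat.card_congr (Equiv.ofInjective χ hχinj)]
      rfl
    have hχrange : χ.range = K.map φ := by
      rw [hχdef, MonoidHom.range_comp, Subgroup.range_subtype]
    have hle2 : χ.range ≤ ψ.range := by
      rw [hχrange, hψrange]; exact Subgroup.map_mono hKP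
    rw [e1]
    exact Subgroup.card_dvd_of_le hle2
  have : Nat.card ψ.range = Nat.card K := Nat.dvd_antisymm hdvd1 hdvd2
  exact ⟨K, hKP, hKN, by rw [hPsplit, this]⟩
end

section
/- Let G be a finite nilpotent group and N a normal subgroup of G. The following are equivalent: (i) N has a complement in G (the extension 1 → N → G → G/N → 1 splits); (ii) for every prime p and every Sylow p-subgroup P of G, N∩P has a complement in P; (iii) the Knutson subindex 𝒦(G,N), the greatest common divisor of Ind(G,N), equals 1. -/
/-- `Ind(G,N)`: the set of `m ∈ ℕ` such that there is a subgroup `K ≤ G` with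
`K ∩ N = {e}` and `m·|N|·|K| = |G|`. -/
def knutsonInd {G : Type*} [Group G] (N : Subgroup G) : Set ℕ :=
  {m | ∃ K : Subgroup G, K ⊓ N = ⊥ ∧ m * Nat.card N * Nat.card K = Nat.card G}

/-- `d` is the greatest common divisor of the set `S ⊆ ℕ`: it divides every element
of `S`, and every common divisor of `S` divides `d`. -/
def IsGCDOf (S : Set ℕ) (d : ℕ) : Prop :=
  (∀ m ∈ S, d ∣ m) ∧ ∀ c : ℕ, (∀ m ∈ S, c ∣ m) → c ∣ d

open Pointwise

section Helpers
variable {G : Type*} [Group G]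

theorem myCardSup {A B : Subgroup G}
    (hset : (↑(A ⊔ B) : Set G) = (A : Set G) * (B : Set G)) (hd : A ⊓ B = ⊥) :
    Nat.card ↥(A ⊔ B) = Nat.card A * Nat.card B := by
  have hmem : ∀ x : A × B, (x.1 : G) * x.2 ∈ A ⊔ B := by
    intro x
    have : ((x.1 : G) * x.2) ∈ ((A : Set G) * (B : Set G)) :=
      Set.mul_mem_mul x.1.2 x.2.2
    rwa [← hset] at this
  have hbij : Function.Bijective (fun x : A × B => (⟨(x.1 : G) * x.2, hmem x⟩ : ↥(A ⊔ B))) := by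
    constructor
    · rintro ⟨⟨a1, ha1⟩, ⟨b1, hb1⟩⟩ ⟨⟨a2, ha2⟩, ⟨b2, hb2⟩⟩ h
      have h' : a1 * b1 = a2 * b2 := congrArg Subtype.val h
      have key : a2⁻¹ * a1 = b2 * b1⁻¹ := by
        have h2 : a2⁻¹ * (a1 * b1) * b1⁻¹ = a2⁻¹ * (a2 * b2) * b1⁻¹ := by rw [h']
        simpa [mul_assoc] using h2
      have hmemA : a2⁻¹ * a1 ∈ A := mul_mem (inv_mem ha2) ha1
      have hmemB : a2⁻¹ * a1 ∈ B := key ▸ mul_mem hb2 (inv_mem hb1)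
      have : a2⁻¹ * a1 ∈ A ⊓ B := ⟨hmemA, hmemB⟩
      rw [hd, Subgroup.mem_bot] at this
      have ha : a1 = a2 := by
        have := congrArg (fun y => a2 * y) this
        simpa [mul_assoc] using this.symm |>.symm
      have hb : b1 = b2 := by
        have key2 : b2 * b1⁻¹ = 1 := key ▸ this
        have := congrArg (fun y => y * b1) key2
        simpa [mul_assoc] using this.symm
      simp [ha, hb]
    · rintro ⟨x, hx⟩
      have : x ∈ ((A : Set G) * (B : Set G)) := by rw [← hset]; exact hx
      obtain ⟨a, ha, b, hb, rfl⟩ := this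
      exact ⟨(⟨⟨a, ha⟩, ⟨b, hb⟩⟩ : A × B), rfl⟩
  calc Nat.card ↥(A ⊔ B) = Nat.card (A × B) := (Nat.card_eq_of_bijective _ hbij).symm.trans rfl
    _ = Nat.card A * Nat.card B := Nat.card_prod _ _

theorem myCardSupNormal {A B : Subgroup G} [B.Normal] (hd : A ⊓ B = ⊥) :
    Nat.card ↥(A ⊔ B) = Nat.card A * Nat.card B :=
  myCardSup (Subgroup.mul_normal A B ▸ rfl) hd

theorem myCoeSupOfCommute {A B : Subgroup G}
    (hc : ∀ a ∈ A, ∀ b ∈ B, Commute a b) :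
    (↑(A ⊔ B) : Set G) = (A : Set G) * (B : Set G) := by
  have hsub : ((A : Set G) * (B : Set G)) ⊆ ↑(A ⊔ B) := by
    rintro x ⟨a, ha, b, hb, rfl⟩
    exact mul_mem (Subgroup.mem_sup_left ha) (Subgroup.mem_sup_right hb)
  refine Set.Subset.antisymm ?_ hsub
  let C : Subgroup G :=
    { carrier := (A : Set G) * (B : Set G)
      one_mem' := ⟨1, one_mem A, 1, one_mem B, one_mul 1⟩
      mul_mem' := by
        rintro x y ⟨a1, ha1, b1, hb1, rfl⟩ ⟨a2, ha2, b2, hb2, rfl⟩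
        refine ⟨a1 * a2, mul_mem ha1 ha2, b1 * b2, mul_mem hb1 hb2, ?_⟩
        have := (hc a2 ha2 b1 hb1).eq
        rw [mul_assoc, ← mul_assoc b1, ← this, mul_assoc, ← mul_assoc]
      inv_mem' := by
        rintro x ⟨a, ha, b, hb, rfl⟩
        refine ⟨a⁻¹, inv_mem ha, b⁻¹, inv_mem hb, ?_⟩
        show a⁻¹ * b⁻¹ = (a * b)⁻¹
        rw [(hc a⁻¹ (inv_mem ha) b⁻¹ (inv_mem hb)).eq, mul_inv_rev] }
  have : A ⊔ B ≤ C := by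
    refine sup_le ?_ ?_
    · intro a ha; exact ⟨a, ha, 1, one_mem B, mul_one a⟩
    · intro b hb; exact ⟨1, one_mem A, b, hb, one_mul b⟩
  exact this


theorem mySylowNormal [Finite G] [Group.IsNilpotent G] {p : ℕ} [hp : Fact p.Prime]
    (P : Sylow p G) : (P : Subgroup G).Normal := by
  have h := (isNilpotent_of_finite_tfae (G := G)).out 0 3
  exact h.mp ‹_› p ‹_› P

/-- In a finite nilpotent group, any p-subgroup is contained in any Sylow p-subgroup. -/
theorem myLeSylow [Finite G] [Group.IsNilpotent G] {p : ℕ} [hp : Fact p.Prime]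
    (P : Sylow p G) {Q : Subgroup G} (hQ : IsPGroup p Q) : Q ≤ (P : Subgroup G) := by
  obtain ⟨P', hle⟩ := IsPGroup.exists_le_sylow hQ
  haveI : Unique (Sylow p G) := P.unique_of_normal (mySylowNormal P)
  rwa [Subsingleton.elim P' P] at hle

/-- `K ⊓ P` is a Sylow `p`-subgroup of `K` in a finite nilpotent group. -/
theorem myCardInfSylow [Finite G] [Group.IsNilpotent G] {p : ℕ} [hp : Fact p.Prime]
    (P : Sylow p G) (K : Subgroup G) :
    Nat.card ↥(K ⊓ (P : Subgroup G)) = p ^ (Nat.card K).factorization p := by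
  obtain ⟨Q⟩ := (inferInstance : Nonempty (Sylow p K))
  have hQm : IsPGroup p ((Q : Subgroup K).map K.subtype) := Q.isPGroup'.map _
  have hQle : (Q : Subgroup K).map K.subtype ≤ (P : Subgroup G) := myLeSylow P hQm
  have hQle2 : (Q : Subgroup K).map K.subtype ≤ K ⊓ (P : Subgroup G) :=
    le_inf (Subgroup.map_subtype_le _) hQle
  have hinf_le : K ⊓ (P : Subgroup G) ≤ K := inf_le_left
  have hpg : IsPGroup p ↥(K ⊓ (P : Subgroup G)) :=
    P.isPGroup'.to_le inf_le_right
  -- view K ⊓ P inside K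
  set R : Subgroup K := (K ⊓ (P : Subgroup G)).subgroupOf K with hR
  have hRequiv := Subgroup.subgroupOfEquivOfLe hinf_le
  have hRpg : IsPGroup p R := by
    intro x
    obtain ⟨n, hn⟩ := hpg (hRequiv x)
    refine ⟨n, ?_⟩
    apply hRequiv.injective
    rw [map_pow, hn, map_one]
  have hQR : (Q : Subgroup K) ≤ R := by
    intro x hx
    have : (x : G) ∈ (Q : Subgroup K).map K.subtype := ⟨x, hx, rfl⟩
    exact Subgroup.mem_subgroupOf.mpr (hQle2 this)
  have hReq : R = (Q : Subgroup K) := Q.is_maximal' hRpg hQR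
  have h1 : Nat.card ↥(K ⊓ (P : Subgroup G)) = Nat.card R := (Nat.card_congr hRequiv.toEquiv).symm
  rw [h1, hReq]
  exact Q.card_eq_multiplicity

/-- Sylow subgroups at distinct primes centralize each other. -/
theorem mySylowCommute [Finite G] [Group.IsNilpotent G] {p q : ℕ} [hp : Fact p.Prime]
    [hq : Fact q.Prime] (hpq : p ≠ q) (P : Sylow p G) (Q : Sylow q G) :
    ∀ x ∈ (P : Subgroup G), ∀ y ∈ (Q : Subgroup G), Commute x y := by
  haveI hPn := mySylowNormal P
  haveI hQn := mySylowNormal Q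
  have hd : (P : Subgroup G) ⊓ (Q : Subgroup G) = ⊥ := by
    have h1 : Nat.card ↥((P : Subgroup G) ⊓ (Q : Subgroup G)) ∣ Nat.card (P : Subgroup G) :=
      Subgroup.card_dvd_of_le inf_le_left
    have h2 : Nat.card ↥((P : Subgroup G) ⊓ (Q : Subgroup G)) ∣ Nat.card (Q : Subgroup G) :=
      Subgroup.card_dvd_of_le inf_le_right
    obtain ⟨n, hn⟩ := IsPGroup.iff_card.mp P.isPGroup'
    obtain ⟨m, hm⟩ := IsPGroup.iff_card.mp Q.isPGroup'
    rw [hn] at h1; rw [hm] at h2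
    have hcop : Nat.Coprime (p ^ n) (q ^ m) :=
      Nat.Coprime.pow n m ((Nat.coprime_primes hp.out hq.out).mpr hpq)
    have := Nat.eq_one_of_dvd_coprimes hcop h1 h2
    exact Subgroup.card_eq_one.mp this
  intro x hx y hy
  have hcomm : x * y * x⁻¹ * y⁻¹ ∈ (P : Subgroup G) ⊓ (Q : Subgroup G) := by
    constructor
    · have : y * x⁻¹ * y⁻¹ ∈ (P : Subgroup G) := hPn.conj_mem x⁻¹ ((P : Subgroup G).inv_mem hx) y
      have := mul_mem hx this
      show x * y * x⁻¹ * y⁻¹ ∈ (P : Subgroup G)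
      simpa [mul_assoc] using this
    · have : x * y * x⁻¹ ∈ (Q : Subgroup G) := hQn.conj_mem y hy x
      exact mul_mem this ((Q : Subgroup G).inv_mem hy)
  rw [hd, Subgroup.mem_bot] at hcomm
  have : x * y * x⁻¹ * y⁻¹ * y * x = y * x := by rw [hcomm, one_mul]
  unfold Commute SemiconjBy
  calc x * y = x * y * x⁻¹ * y⁻¹ * y * x := by simp [mul_assoc]
    _ = y * x := this

end Helpers

/-- The hard direction: local complements glue to a global complement. -/
theorem myJoin {G : Type*} [Group G] [Finite G] [Group.IsNilpotent G] (N : Subgroup G) [N.Normal]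
    (hlocal : ∀ p : ℕ, p.Prime → ∀ P : Sylow p G,
      ∃ K : Subgroup G, K ≤ (P : Subgroup G) ∧ K ⊓ N = ⊥ ∧
        Nat.card K * Nat.card (N ⊓ (P : Subgroup G) : Subgroup G) =
          Nat.card (P : Subgroup G)) :
    ∃ H : Subgroup G, H ⊓ N = ⊥ ∧ Nat.card H * Nat.card N = Nat.card G := by
  set n := Nat.card G with hn
  have hn0 : n ≠ 0 := Nat.card_pos.ne'
  have hN0 : Nat.card N ≠ 0 := Nat.card_pos.ne'
  set e : ℕ → ℕ := fun p => n.factorization p - (Nat.card N).factorization p with he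
  have key : ∀ S : Finset ℕ, S ⊆ n.primeFactors →
      ∃ K : Subgroup G, K ⊓ N = ⊥ ∧ Nat.card K = ∏ p ∈ S, p ^ e p ∧
        (∀ q : ℕ, q.Prime → q ∉ S → ∀ Q : Sylow q G,
          ∀ x ∈ K, ∀ y ∈ (Q : Subgroup G), Commute x y) := by
    intro S
    induction S using Finset.induction_on with
    | empty =>
      intro _
      refine ⟨⊥, bot_inf_eq N, ?_, ?_⟩
      · simp [Subgroup.card_bot]
      · intro q _ _ Q x hx y _
        rw [Subgroup.mem_bot] at hx
        simp [hx, Commute.one_left]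
    | insert p S hpS ih =>
      intro hsub
      have hp : p.Prime := Nat.prime_of_mem_primeFactors (hsub (Finset.mem_insert_self p S))
      haveI : Fact p.Prime := ⟨hp⟩
      obtain ⟨K', hK'N, hK'card, hK'comm⟩ := ih (fun q hq => hsub (Finset.mem_insert_of_mem hq))
      obtain ⟨P⟩ := (inferInstance : Nonempty (Sylow p G))
      obtain ⟨Kp, hKpP, hKpN, hKpcard⟩ := hlocal p hp P
      -- card Kp = p ^ e p
      have hb : Nat.card ↥(N ⊓ (P : Subgroup G)) = p ^ (Nat.card N).factorization p :=
        myCardInfSylow P N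
      have hc : Nat.card ↥(P : Subgroup G) = p ^ n.factorization p := P.card_eq_multiplicity
      have hble : (Nat.card N).factorization p ≤ n.factorization p := by
        have := (Nat.factorization_le_iff_dvd hN0 hn0).mpr (Subgroup.card_subgroup_dvd_card N)
        exact Finsupp.le_def.mp this p
      have hKpcard' : Nat.card Kp = p ^ e p := by
        rw [hb, hc] at hKpcard
        exact Nat.eq_of_mul_eq_mul_right (pow_pos hp.pos _)
          (hKpcard.trans (pow_sub_mul_pow p hble).symm)
      have hcomm : ∀ a ∈ K', ∀ y ∈ Kp, Commute a y :=
        fun a ha y hy => hK'comm p hp hpS P a ha y (hKpP hy)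
      have hset := myCoeSupOfCommute hcomm
      -- coprimality and disjointness
      have hcop : Nat.Coprime (Nat.card K') (Nat.card Kp) := by
        rw [hK'card, hKpcard']
        apply Nat.Coprime.pow_right
        apply Nat.coprime_prod_left_iff.mpr
        intro q hq
        have hqprime : q.Prime :=
          Nat.prime_of_mem_primeFactors (hsub (Finset.mem_insert_of_mem hq))
        have hqp : q ≠ p := fun h => hpS (h ▸ hq)
        exact Nat.Coprime.pow_left _ ((Nat.coprime_primes hqprime hp).mpr hqp)
      have hdisj : K' ⊓ Kp = ⊥ := by
        apply Subgroup.card_eq_one.mp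
        exact Nat.eq_one_of_dvd_coprimes hcop
          (Subgroup.card_dvd_of_le inf_le_left) (Subgroup.card_dvd_of_le inf_le_right)
      refine ⟨K' ⊔ Kp, ?_, ?_, ?_⟩
      · -- trivial intersection with N
        rw [eq_bot_iff]
        intro x hx
        obtain ⟨hxK0, hxN⟩ := Subgroup.mem_inf.mp hx
        have hxK : x ∈ ((K' ⊔ Kp : Subgroup G) : Set G) := hxK0
        rw [hset] at hxK
        obtain ⟨a, ha, b, hb', rfl⟩ := hxK
        replace hxN : a * b ∈ N := hxN
        have hab : Commute a b := hcomm a ha b hb'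
        have hα : orderOf a ∣ Nat.card K' := Subgroup.orderOf_dvd_natCard K' ha
        have hβ : orderOf b ∣ Nat.card Kp := Subgroup.orderOf_dvd_natCard Kp hb'
        have hαβ : Nat.Coprime (orderOf a) (orderOf b) :=
          Nat.Coprime.coprime_dvd_left hα (Nat.Coprime.coprime_dvd_right hβ hcop)
        obtain ⟨t, ht0, ht1⟩ : ∃ t : ℕ, t ≡ 0 [MOD orderOf a] ∧ t ≡ 1 [MOD orderOf b] :=
          ⟨(Nat.chineseRemainder hαβ 0 1).1, (Nat.chineseRemainder hαβ 0 1).2.1,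
            (Nat.chineseRemainder hαβ 0 1).2.2⟩
        have hat : a ^ t = 1 := orderOf_dvd_iff_pow_eq_one.mp (Nat.modEq_zero_iff_dvd.mp ht0)
        have hbt : b ^ t = b := by
          have h := (pow_eq_pow_iff_modEq (x := b)).mpr ht1.symm
          rw [pow_one] at h
          exact h.symm
        have hbN : b ∈ N := by
          have : (a * b) ^ t ∈ N := pow_mem hxN t
          rwa [hab.mul_pow, hat, one_mul, hbt] at this
        have hb1 : b = 1 := by
          have : b ∈ Kp ⊓ N := ⟨hb', hbN⟩
          rwa [hKpN, Subgroup.mem_bot] at this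
        have ha1 : a = 1 := by
          have haN : a ∈ N := by rwa [hb1, mul_one] at hxN
          have : a ∈ K' ⊓ N := ⟨ha, haN⟩
          rwa [hK'N, Subgroup.mem_bot] at this
        show a * b ∈ (⊥ : Subgroup G)
        rw [Subgroup.mem_bot, ha1, hb1, mul_one]
      · -- cardinality
        rw [myCardSup hset hdisj, hK'card, hKpcard', Finset.prod_insert hpS, mul_comm]
      · -- commuting with other Sylows
        intro q hq hqS Q x hx y hy
        haveI : Fact q.Prime := ⟨hq⟩
        have hqp : p ≠ q := fun h => hqS (h ▸ Finset.mem_insert_self p S)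
        have hqS' : q ∉ S := fun h => hqS (Finset.mem_insert_of_mem h)
        have h1 : K' ≤ Subgroup.centralizer (Q : Subgroup G) := by
          intro z hz
          exact Subgroup.mem_centralizer_iff.mpr
            (fun g hg => (hK'comm q hq hqS' Q z hz g hg).eq.symm)
        have h2 : Kp ≤ Subgroup.centralizer (Q : Subgroup G) := by
          intro z hz
          exact Subgroup.mem_centralizer_iff.mpr
            (fun g hg => (mySylowCommute hqp P Q z (hKpP hz) g hg).eq.symm)
        have := (sup_le h1 h2) hx
        exact (Subgroup.mem_centralizer_iff.mp this y hy).symm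
  obtain ⟨K, hKN, hKcard, -⟩ := key n.primeFactors (Finset.Subset.refl _)
  refine ⟨K, hKN, ?_⟩
  have hNcard : Nat.card N = ∏ p ∈ n.primeFactors, p ^ (Nat.card N).factorization p := by
    have h1 : (Nat.card N).factorization.prod (fun p k => p ^ k) = Nat.card N :=
      Nat.factorization_prod_pow_eq_self hN0
    rw [Finsupp.prod, Nat.support_factorization] at h1
    conv_lhs => rw [← h1]
    apply Finset.prod_subset (Nat.primeFactors_mono (Subgroup.card_subgroup_dvd_card N) hn0)
    intro p _ hp2
    have : (Nat.card N).factorization p = 0 := by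
      rw [← Nat.support_factorization] at hp2
      exact Finsupp.notMem_support_iff.mp hp2
    rw [this, pow_zero]
  have hGcard : (∏ p ∈ n.primeFactors, p ^ n.factorization p) = n := by
    have h1 : n.factorization.prod (fun p k => p ^ k) = n :=
      Nat.factorization_prod_pow_eq_self hn0
    rw [Finsupp.prod, Nat.support_factorization] at h1
    exact h1
  have step2 : ∏ p ∈ n.primeFactors, p ^ e p * p ^ (Nat.card N).factorization p
      = ∏ p ∈ n.primeFactors, p ^ n.factorization p := by
    apply Finset.prod_congr rfl
    intro p _
    have hble : (Nat.card N).factorization p ≤ n.factorization p := by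
      have := (Nat.factorization_le_iff_dvd hN0 hn0).mpr (Subgroup.card_subgroup_dvd_card N)
      exact Finsupp.le_def.mp this p
    exact pow_sub_mul_pow p hble
  rw [hKcard, hNcard, ← Finset.prod_mul_distrib]
  exact step2.trans hGcard


section Main
variable {G : Type*} [Group G]

theorem myGlobalToLocal [Finite G] [Group.IsNilpotent G] (N : Subgroup G) [N.Normal]
    (h : ∃ H : Subgroup G, H ⊓ N = ⊥ ∧ Nat.card H * Nat.card N = Nat.card G) :
    ∀ p : ℕ, p.Prime → ∀ P : Sylow p G,
      ∃ K : Subgroup G, K ≤ (P : Subgroup G) ∧ K ⊓ N = ⊥ ∧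
        Nat.card K * Nat.card (N ⊓ (P : Subgroup G) : Subgroup G) =
          Nat.card (P : Subgroup G) := by
  obtain ⟨H, hHN, hcard⟩ := h
  intro p hp P
  haveI : Fact p.Prime := ⟨hp⟩
  have hH0 : Nat.card H ≠ 0 := Nat.card_pos.ne'
  have hN0 : Nat.card N ≠ 0 := Nat.card_pos.ne'
  refine ⟨H ⊓ (P : Subgroup G), inf_le_right, ?_, ?_⟩
  · rw [eq_bot_iff]
    intro x hx
    obtain ⟨hx1, hx2⟩ := Subgroup.mem_inf.mp hx
    obtain ⟨hxH, _⟩ := Subgroup.mem_inf.mp hx1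
    have : x ∈ H ⊓ N := Subgroup.mem_inf.mpr ⟨hxH, hx2⟩
    rwa [hHN] at this
  · rw [myCardInfSylow P H, myCardInfSylow P N, P.card_eq_multiplicity, ← pow_add]
    congr 1
    have hfact : (Nat.card G).factorization p
        = (Nat.card H).factorization p + (Nat.card N).factorization p := by
      rw [← hcard, Nat.factorization_mul hH0 hN0, Finsupp.add_apply]
    rw [hfact]

theorem myIndDvd [Finite G] (N : Subgroup G) {m : ℕ} (hm : m ∈ knutsonInd N) :
    m ∣ Nat.card G := by
  obtain ⟨K, _, hK⟩ := hm
  exact ⟨Nat.card N * Nat.card K, by rw [← mul_assoc]; exact hK.symm⟩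

theorem myIndBase [Finite G] (N : Subgroup G) :
    Nat.card G / Nat.card N ∈ knutsonInd N :=
  ⟨⊥, bot_inf_eq N, by
    rw [Subgroup.card_bot, mul_one, Nat.div_mul_cancel (Subgroup.card_subgroup_dvd_card N)]⟩

theorem myLocalToGCD [Finite G] [Group.IsNilpotent G] (N : Subgroup G) [N.Normal]
    (hlocal : ∀ p : ℕ, p.Prime → ∀ P : Sylow p G,
      ∃ K : Subgroup G, K ≤ (P : Subgroup G) ∧ K ⊓ N = ⊥ ∧
        Nat.card K * Nat.card (N ⊓ (P : Subgroup G) : Subgroup G) =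
          Nat.card (P : Subgroup G)) :
    ∀ d : ℕ, IsGCDOf (knutsonInd N) d → d = 1 := by
  intro d hd
  have hn0 : Nat.card G ≠ 0 := Nat.card_pos.ne'
  have hN0 : Nat.card N ≠ 0 := Nat.card_pos.ne'
  have hdm0 : d ∣ Nat.card G / Nat.card N := hd.1 _ (myIndBase N)
  have hdG : d ∣ Nat.card G := hdm0.trans (Nat.div_dvd_of_dvd (Subgroup.card_subgroup_dvd_card N))
  by_contra hd1
  obtain ⟨p, hp, hpd⟩ := Nat.exists_prime_and_dvd hd1
  haveI : Fact p.Prime := ⟨hp⟩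
  obtain ⟨P⟩ := (inferInstance : Nonempty (Sylow p G))
  obtain ⟨K, hKP, hKN, hKcard⟩ := hlocal p hp P
  have hK0 : Nat.card K ≠ 0 := Nat.card_pos.ne'
  -- card K = p ^ (c - b)
  have hb : Nat.card (N ⊓ (P : Subgroup G) : Subgroup G) = p ^ (Nat.card N).factorization p :=
    myCardInfSylow P N
  have hc : Nat.card (P : Subgroup G) = p ^ (Nat.card G).factorization p :=
    P.card_eq_multiplicity
  have hble : (Nat.card N).factorization p ≤ (Nat.card G).factorization p := by
    have := (Nat.factorization_le_iff_dvd hN0 hn0).mpr (Subgroup.card_subgroup_dvd_card N)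
    exact Finsupp.le_def.mp this p
  have hKcard' : Nat.card K
      = p ^ ((Nat.card G).factorization p - (Nat.card N).factorization p) := by
    rw [hb, hc] at hKcard
    exact Nat.eq_of_mul_eq_mul_right (pow_pos hp.pos _)
      (hKcard.trans (pow_sub_mul_pow p hble).symm)
  -- card N * card K divides card G
  have hdvd : Nat.card N * Nat.card K ∣ Nat.card G := by
    have h1 : Nat.card ↥(K ⊔ N) = Nat.card K * Nat.card N := myCardSupNormal hKN
    rw [mul_comm, ← h1]
    exact Subgroup.card_subgroup_dvd_card _
  set m := Nat.card G / (Nat.card N * Nat.card K) with hm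
  have hmeq : m * Nat.card N * Nat.card K = Nat.card G := by
    rw [mul_assoc]
    exact Nat.div_mul_cancel hdvd
  have hmInd : m ∈ knutsonInd N := ⟨K, hKN, hmeq⟩
  have hm0 : m ≠ 0 := by
    intro h0
    rw [h0, zero_mul, zero_mul] at hmeq
    exact hn0 hmeq.symm
  have hfact : (Nat.card G).factorization p
      = m.factorization p + (Nat.card N).factorization p + (Nat.card K).factorization p := by
    rw [← hmeq, Nat.factorization_mul (mul_ne_zero hm0 hN0) hK0,
      Nat.factorization_mul hm0 hN0, Finsupp.add_apply, Finsupp.add_apply]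
  have hKfact : (Nat.card K).factorization p
      = (Nat.card G).factorization p - (Nat.card N).factorization p := by
    rw [hKcard', hp.factorization_pow, Finsupp.single_eq_same]
  have hmfact : m.factorization p = 0 := by omega
  have hpm : p ∣ m := hpd.trans (hd.1 m hmInd)
  have := (Nat.Prime.dvd_iff_one_le_factorization hp hm0).mp hpm
  omega

theorem myGCDToLocal [Finite G] [Group.IsNilpotent G] (N : Subgroup G) [N.Normal]
    (hgcd : ∀ d : ℕ, IsGCDOf (knutsonInd N) d → d = 1) :
    ∀ p : ℕ, p.Prime → ∀ P : Sylow p G,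
      ∃ K : Subgroup G, K ≤ (P : Subgroup G) ∧ K ⊓ N = ⊥ ∧
        Nat.card K * Nat.card (N ⊓ (P : Subgroup G) : Subgroup G) =
          Nat.card (P : Subgroup G) := by
  have hn0 : Nat.card G ≠ 0 := Nat.card_pos.ne'
  have hN0 : Nat.card N ≠ 0 := Nat.card_pos.ne'
  have hfin : (knutsonInd N).Finite :=
    Set.Finite.subset (Set.finite_Iic (Nat.card G))
      (fun m hm => Nat.le_of_dvd Nat.card_pos (myIndDvd N hm))
  set d0 := hfin.toFinset.gcd id with hd0
  have hgcd0 : IsGCDOf (knutsonInd N) d0 :=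
    ⟨fun m hm => Finset.gcd_dvd (hfin.mem_toFinset.mpr hm),
     fun c hc => Finset.dvd_gcd (fun m hm => hc m (hfin.mem_toFinset.mp hm))⟩
  have hd01 : d0 = 1 := hgcd d0 hgcd0
  by_contra hcon
  push_neg at hcon
  obtain ⟨p, hp, P, hno⟩ := hcon
  haveI : Fact p.Prime := ⟨hp⟩
  haveI hNPn : (N ⊓ (P : Subgroup G)).Normal := by
    constructor
    intro x hx g
    obtain ⟨hx1, hx2⟩ := Subgroup.mem_inf.mp hx
    exact Subgroup.mem_inf.mpr ⟨‹N.Normal›.conj_mem x hx1 g, (mySylowNormal P).conj_mem x hx2 g⟩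
  -- p divides every element of knutsonInd N
  have hpall : ∀ m ∈ knutsonInd N, p ∣ m := by
    rintro m ⟨K, hKN, hmeq⟩
    have hK0 : Nat.card K ≠ 0 := Nat.card_pos.ne'
    have hm0 : m ≠ 0 := by
      intro h0
      rw [h0, zero_mul, zero_mul] at hmeq
      exact hn0 hmeq.symm
    have hA : Nat.card (K ⊓ (P : Subgroup G) : Subgroup G)
        = p ^ (Nat.card K).factorization p := myCardInfSylow P K
    have hB : Nat.card (N ⊓ (P : Subgroup G) : Subgroup G)
        = p ^ (Nat.card N).factorization p := myCardInfSylow P N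
    have hc : Nat.card (P : Subgroup G) = p ^ (Nat.card G).factorization p :=
      P.card_eq_multiplicity
    have hABd : (K ⊓ (P : Subgroup G)) ⊓ (N ⊓ (P : Subgroup G)) = ⊥ := by
      rw [eq_bot_iff]
      intro x hx
      obtain ⟨hx1, hx2⟩ := Subgroup.mem_inf.mp hx
      have : x ∈ K ⊓ N :=
        Subgroup.mem_inf.mpr ⟨(Subgroup.mem_inf.mp hx1).1, (Subgroup.mem_inf.mp hx2).1⟩
      rwa [hKN] at this
    have hsupcard : Nat.card ↥((K ⊓ (P : Subgroup G)) ⊔ (N ⊓ (P : Subgroup G)))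
        = p ^ ((Nat.card K).factorization p + (Nat.card N).factorization p) := by
      rw [myCardSupNormal hABd, hA, hB, pow_add]
    have hsuple : (K ⊓ (P : Subgroup G)) ⊔ (N ⊓ (P : Subgroup G)) ≤ (P : Subgroup G) :=
      sup_le inf_le_right inf_le_right
    have hdvdP : p ^ ((Nat.card K).factorization p + (Nat.card N).factorization p)
        ∣ p ^ (Nat.card G).factorization p := by
      rw [← hsupcard, ← hc]
      exact Subgroup.card_dvd_of_le hsuple
    have hle : (Nat.card K).factorization p + (Nat.card N).factorization p
        ≤ (Nat.card G).factorization p :=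
      (Nat.pow_dvd_pow_iff_le_right hp.one_lt).mp hdvdP
    have hne : (Nat.card K).factorization p + (Nat.card N).factorization p
        ≠ (Nat.card G).factorization p := by
      intro heq
      have hbot : (K ⊓ (P : Subgroup G)) ⊓ N = ⊥ := by
        rw [eq_bot_iff]
        intro x hx
        obtain ⟨hx1, hx2⟩ := Subgroup.mem_inf.mp hx
        have : x ∈ K ⊓ N := Subgroup.mem_inf.mpr ⟨(Subgroup.mem_inf.mp hx1).1, hx2⟩
        rwa [hKN] at this
      exact hno _ inf_le_right hbot (by rw [hA, hB, hc, ← pow_add, heq])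
    have hfact : (Nat.card G).factorization p
        = m.factorization p + (Nat.card N).factorization p + (Nat.card K).factorization p := by
      rw [← hmeq, Nat.factorization_mul (mul_ne_zero hm0 hN0) hK0,
        Nat.factorization_mul hm0 hN0, Finsupp.add_apply, Finsupp.add_apply]
    have h1le : 1 ≤ m.factorization p := by omega
    exact (Nat.Prime.dvd_iff_one_le_factorization hp hm0).mpr h1le
  have hpd0 : p ∣ d0 := Finset.dvd_gcd (fun m hm => hpall m (hfin.mem_toFinset.mp hm))
  rw [hd01] at hpd0
  exact hp.ne_one (Nat.eq_one_of_dvd_one hpd0)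

end Main

/-- Let `G` be a finite nilpotent group and `N ⊴ G`. The following
are equivalent: (i) `N` has a complement in `G`; (ii) for every prime `p` and every
Sylow `p`-subgroup `P` of `G`, `N ∩ P` has a complement in `P`; (iii) the Knutson
subindex `𝒦(G,N) = gcd(Ind(G,N))` equals `1`. -/
theorem nilpotent_complement_tfae {G : Type*} [Group G] [Finite G]
    [Group.IsNilpotent G] (N : Subgroup G) [N.Normal] :
    ((∃ H : Subgroup G, H ⊓ N = ⊥ ∧ Nat.card H * Nat.card N = Nat.card G) ↔
      (∀ p : ℕ, p.Prime → ∀ P : Sylow p G,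
        ∃ K : Subgroup G, K ≤ (P : Subgroup G) ∧ K ⊓ N = ⊥ ∧
          Nat.card K * Nat.card (N ⊓ (P : Subgroup G) : Subgroup G) =
            Nat.card (P : Subgroup G))) ∧
    ((∀ p : ℕ, p.Prime → ∀ P : Sylow p G,
        ∃ K : Subgroup G, K ≤ (P : Subgroup G) ∧ K ⊓ N = ⊥ ∧
          Nat.card K * Nat.card (N ⊓ (P : Subgroup G) : Subgroup G) =
            Nat.card (P : Subgroup G)) ↔
      (∀ d : ℕ, IsGCDOf (knutsonInd N) d → d = 1)) :=
  ⟨⟨myGlobalToLocal N, myJoin N⟩, ⟨myLocalToGCD N, myGCDToLocal N⟩⟩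
end

section
/- Let G be a finite group and N a normal subgroup of G. For each prime p dividing |G| fix a Sylow p-subgroup P_p of G, and let Ind_p = { m ∈ ℕ : there exists a subgroup K of G with K ≤ P_p, K ∩ N = {e}, and m·|N∩P_p|·|K| = |P_p| }. Then the Knutson subindex 𝒦(G,N), the greatest common divisor of Ind(G,N), equals the product over the primes p dividing |G| of the greatest common divisors of the sets Ind_p; moreover each factor gcd(Ind_p) is independent of the choice of Sylow p-subgroup P_p. -/
/-- `Ind_p` relative to a Sylow `p`-subgroup `P`: the set of `m ∈ ℕ` such that there
is a subgroup `K ≤ P` with `K ∩ N = {e}` and `m·|N∩P|·|K| = |P|`. -/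
def knutsonIndSylow {G : Type*} [Group G] (N P : Subgroup G) : Set ℕ :=
  {m | ∃ K : Subgroup G, K ≤ P ∧ K ⊓ N = ⊥ ∧
    m * Nat.card (N ⊓ P : Subgroup G) * Nat.card K = Nat.card P}

open Pointwise Subgroup

section Helpers

variable {G : Type*} [Group G] [Finite G] {p : ℕ}

private lemma my_finite_sylow : Finite (Sylow p G) :=
  Finite.of_injective (fun P : Sylow p G => (P : Subgroup G)) fun _ _ h => Sylow.ext h

private lemma card_smul (g : MulAut G) (K : Subgroup G) :
    Nat.card (g • K : Subgroup G) = Nat.card K :=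
  (Nat.card_congr (Subgroup.equivSMul g K).toEquiv).symm

/-- Any `p`-subgroup has a conjugate inside any given Sylow `p`-subgroup. -/
private lemma exists_conj_le_sylow [Fact p.Prime] (X : Subgroup G) (hX : IsPGroup p X)
    (P : Sylow p G) : ∃ g : G, MulAut.conj g • X ≤ (P : Subgroup G) := by
  haveI : Finite (Sylow p G) := my_finite_sylow
  obtain ⟨Q, hQ⟩ := hX.exists_le_sylow
  obtain ⟨g, hg⟩ := MulAction.exists_smul_eq G Q P
  refine ⟨g, ?_⟩
  have : MulAut.conj g • X ≤ MulAut.conj g • (Q : Subgroup G) :=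
    (Subgroup.pointwise_smul_le_pointwise_smul_iff).2 hQ
  rwa [← Sylow.coe_subgroup_smul, hg] at this

/-- If `K ∩ N = ⊥` then there is `K' ≤ P` with `K' ∩ N = ⊥` and `|K'|` the `p`-part of `|K|`. -/
private lemma exists_sylow_witness [Fact p.Prime] (N K : Subgroup G) [N.Normal]
    (hKN : K ⊓ N = ⊥) (P : Sylow p G) :
    ∃ K' : Subgroup G, K' ≤ P ∧ K' ⊓ N = ⊥ ∧
      Nat.card K' = p ^ (Nat.card K).factorization p := by
  obtain ⟨R⟩ := (Sylow.nonempty : Nonempty (Sylow p K))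
  set X : Subgroup G := R.toSubgroup.map K.subtype with hXdef
  have hXK : X ≤ K := by
    rintro x ⟨y, -, rfl⟩; exact y.2
  have hXp : IsPGroup p X := R.2.map K.subtype
  have hXcard : Nat.card X = p ^ (Nat.card K).factorization p := by
    rw [hXdef, Nat.card_congr (Subgroup.equivMapOfInjective R.toSubgroup K.subtype
      K.subtype_injective).toEquiv.symm]
    exact R.card_eq_multiplicity
  obtain ⟨g, hg⟩ := exists_conj_le_sylow X hXp P
  refine ⟨MulAut.conj g • X, hg, ?_, by rw [card_smul, hXcard]⟩
  have hXN : X ⊓ N = ⊥ :=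
    le_bot_iff.1 (hKN ▸ inf_le_inf_right N hXK)
  calc MulAut.conj g • X ⊓ N = MulAut.conj g • X ⊓ MulAut.conj g • N := by
        rw [Subgroup.Normal.conj_smul_eq_self g N]
    _ = MulAut.conj g • (X ⊓ N) := (Subgroup.smul_inf _ _ _).symm
    _ = ⊥ := by rw [hXN, Subgroup.smul_bot]

/-- For `N` normal, `|N ⊓ P|` is the `p`-part of `|N|`. -/
private lemma card_inf_sylow [Fact p.Prime] (N : Subgroup G) [N.Normal] (P : Sylow p G) :
    Nat.card (N ⊓ (P : Subgroup G) : Subgroup G) = p ^ (Nat.card N).factorization p := by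
  have hp : p.Prime := Fact.out
  have hN0 : Nat.card N ≠ 0 := Nat.card_pos.ne'
  -- the intersection is a p-group dividing |N|
  have hpg : IsPGroup p (N ⊓ (P : Subgroup G) : Subgroup G) := P.2.to_le inf_le_right
  obtain ⟨a, ha⟩ := hpg.exists_card_eq
  have hdvdN : Nat.card (N ⊓ (P : Subgroup G) : Subgroup G) ∣ Nat.card N :=
    Subgroup.card_dvd_of_le inf_le_left
  have h1 : Nat.card (N ⊓ (P : Subgroup G) : Subgroup G) ∣ p ^ (Nat.card N).factorization p := by
    rw [ha] at hdvdN ⊢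
    exact pow_dvd_pow p ((hp.pow_dvd_iff_le_factorization hN0).1 hdvdN)
  -- a Sylow p-subgroup of N conjugates into N ⊓ P
  obtain ⟨R⟩ := (Sylow.nonempty : Nonempty (Sylow p N))
  set X : Subgroup G := R.toSubgroup.map N.subtype with hXdef
  have hXN : X ≤ N := by rintro x ⟨y, -, rfl⟩; exact y.2
  have hXp : IsPGroup p X := R.2.map N.subtype
  have hXcard : Nat.card X = p ^ (Nat.card N).factorization p := by
    rw [hXdef, Nat.card_congr (Subgroup.equivMapOfInjective R.toSubgroup N.subtype
      N.subtype_injective).toEquiv.symm]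
    exact R.card_eq_multiplicity
  obtain ⟨g, hg⟩ := exists_conj_le_sylow X hXp P
  have hgN : MulAut.conj g • X ≤ N := by
    rw [← Subgroup.Normal.conj_smul_eq_self g N]
    exact (Subgroup.pointwise_smul_le_pointwise_smul_iff).2 hXN
  have h2 : p ^ (Nat.card N).factorization p ∣
      Nat.card (N ⊓ (P : Subgroup G) : Subgroup G) := by
    rw [← hXcard, ← card_smul (MulAut.conj g) X]
    exact Subgroup.card_dvd_of_le (le_inf hgN hg)
  exact Nat.dvd_antisymm h1 h2

/-- `Ind_p` does not depend on the choice of the Sylow subgroup (as a set). -/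
private lemma indSylow_subset [Fact p.Prime] (N : Subgroup G) [N.Normal] (P₁ P₂ : Sylow p G) :
    knutsonIndSylow N (P₁ : Subgroup G) ⊆ knutsonIndSylow N (P₂ : Subgroup G) := by
  haveI : Finite (Sylow p G) := my_finite_sylow
  rintro m ⟨K, hKP, hKN, hcard⟩
  obtain ⟨g, hg⟩ := MulAction.exists_smul_eq G P₁ P₂
  refine ⟨MulAut.conj g • K, ?_, ?_, ?_⟩
  · have := (Subgroup.pointwise_smul_le_pointwise_smul_iff (a := MulAut.conj g)).2 hKP
    rwa [← Sylow.coe_subgroup_smul, hg] at this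
  · calc MulAut.conj g • K ⊓ N = MulAut.conj g • K ⊓ MulAut.conj g • N := by
          rw [Subgroup.Normal.conj_smul_eq_self g N]
      _ = MulAut.conj g • (K ⊓ N) := (Subgroup.smul_inf _ _ _).symm
      _ = ⊥ := by rw [hKN, Subgroup.smul_bot]
  · have hNP : (N ⊓ (P₂ : Subgroup G)) = MulAut.conj g • (N ⊓ (P₁ : Subgroup G)) := by
      rw [Subgroup.smul_inf, Subgroup.Normal.conj_smul_eq_self g N, ← Sylow.coe_subgroup_smul, hg]
    have hP : Nat.card (P₂ : Subgroup G) = Nat.card (P₁ : Subgroup G) := by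
      rw [← hg, Sylow.coe_subgroup_smul, card_smul]
    rw [card_smul, hNP, card_smul, hP]
    exact hcard

/-- A divisor of `n` is the product of its `p`-parts over the prime factors of `n`. -/
private lemma eq_prod_parts {m n : ℕ} (hn : n ≠ 0) (hmn : m ∣ n) (hm : m ≠ 0) :
    m = ∏ p ∈ n.primeFactors, p ^ m.factorization p := by
  have hsub : m.primeFactors ⊆ n.primeFactors := Nat.primeFactors_mono hmn hn
  conv_lhs => rw [← Nat.factorization_prod_pow_eq_self hm]
  rw [Finsupp.prod, Nat.support_factorization]
  refine Finset.prod_subset hsub fun q _ hq => ?_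
  rw [← Nat.support_factorization, Finsupp.notMem_support_iff] at hq
  rw [hq, pow_zero]

end Helpers

/-- Let `G` be a finite group, `N ⊴ G`. Fixing a Sylow
`p`-subgroup `P p` for each prime `p` dividing `|G|`, the Knutson subindex
`𝒦(G,N) = gcd(Ind(G,N))` equals `∏_p gcd(Ind_p)`, and each factor `gcd(Ind_p)` is
independent of the choice of Sylow `p`-subgroup. -/
theorem knutson_subindex_eq_prod_of_sylow {G : Type*} [Group G] [Finite G]
    (N : Subgroup G) [N.Normal]
    (P : ∀ p : ℕ, Sylow p G) (k : ℕ → ℕ)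
    (hk : ∀ p ∈ (Nat.card G).primeFactors,
      IsGCDOf (knutsonIndSylow N (P p : Subgroup G)) (k p))
    (d : ℕ) (hd : IsGCDOf (knutsonInd N) d) :
    (d = ∏ p ∈ (Nat.card G).primeFactors, k p) ∧
      ∀ p ∈ (Nat.card G).primeFactors, ∀ P₁ P₂ : Sylow p G, ∀ a b : ℕ,
        IsGCDOf (knutsonIndSylow N (P₁ : Subgroup G)) a →
        IsGCDOf (knutsonIndSylow N (P₂ : Subgroup G)) b → a = b := by
  classical
  have hG0 : Nat.card G ≠ 0 := Nat.card_pos.ne'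
  have hN0 : Nat.card N ≠ 0 := Nat.card_pos.ne'
  have hNn : Nat.card N ∣ (Nat.card G) := N.card_subgroup_dvd_card
  -- Step A: the p-part of any element of Ind(G,N) lies in Ind_p
  have stepA : ∀ m ∈ knutsonInd N, ∀ p ∈ (Nat.card G).primeFactors,
      p ^ m.factorization p ∈ knutsonIndSylow N (P p : Subgroup G) := by
    rintro m ⟨K, hKN, hcard⟩ p hp
    haveI : Fact p.Prime := ⟨Nat.prime_of_mem_primeFactors hp⟩
    have hK0 : Nat.card K ≠ 0 := Nat.card_pos.ne'
    have hm0 : m ≠ 0 := by rintro rfl; rw [zero_mul, zero_mul] at hcard; exact hG0 hcard.symm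
    obtain ⟨K', hK'P, hK'N, hK'card⟩ := exists_sylow_witness N K hKN (P p)
    refine ⟨K', hK'P, hK'N, ?_⟩
    have key : m.factorization p + (Nat.card N).factorization p
        + (Nat.card K).factorization p = (Nat.card G).factorization p := by
      have h1 := congrArg Nat.factorization hcard
      rw [Nat.factorization_mul (mul_ne_zero hm0 hN0) hK0,
        Nat.factorization_mul hm0 hN0] at h1
      have h2 := congrArg (fun f : ℕ →₀ ℕ => f p) h1
      simpa using h2
    rw [hK'card, card_inf_sylow N (P p), (P p).card_eq_multiplicity,
      ← pow_add, ← pow_add, key]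
  -- Step B: ∏ k p divides every element of Ind(G,N)
  have prod_dvd : ∀ m ∈ knutsonInd N, (∏ p ∈ (Nat.card G).primeFactors, k p) ∣ m := by
    intro m hm
    obtain ⟨K, hKN, hcard⟩ := hm
    have hm0 : m ≠ 0 := by rintro rfl; rw [zero_mul, zero_mul] at hcard; exact hG0 hcard.symm
    have hmn : m ∣ (Nat.card G) := ⟨Nat.card N * Nat.card K, by rw [← hcard]; ring⟩
    conv_rhs => rw [eq_prod_parts hG0 hmn hm0]
    exact Finset.prod_dvd_prod_of_dvd _ _ fun p hp =>
      (hk p hp).1 _ (stepA m ⟨K, hKN, hcard⟩ p hp)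
  -- Step C1: k p itself belongs to Ind_p
  have kp_mem : ∀ p ∈ (Nat.card G).primeFactors, k p ∈ knutsonIndSylow N (P p : Subgroup G) := by
    intro p hp
    haveI : Fact p.Prime := ⟨Nat.prime_of_mem_primeFactors hp⟩
    have hpp : p.Prime := Fact.out
    have hle : (Nat.card N).factorization p ≤ (Nat.card G).factorization p :=
      ((Nat.factorization_le_iff_dvd hN0 hG0).2 hNn) p
    have hmem0 : p ^ ((Nat.card G).factorization p - (Nat.card N).factorization p)
        ∈ knutsonIndSylow N (P p : Subgroup G) := by
      refine ⟨⊥, bot_le, by simp, ?_⟩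
      rw [Subgroup.card_bot, mul_one, card_inf_sylow N (P p), ← pow_add,
        Nat.sub_add_cancel hle, (P p).card_eq_multiplicity]
    have hpow : ∀ m ∈ knutsonIndSylow N (P p : Subgroup G), ∃ i, m = p ^ i := by
      rintro m ⟨K, -, -, hcard⟩
      have hdvd : m ∣ p ^ (Nat.card G).factorization p := by
        rw [← (P p).card_eq_multiplicity]
        exact ⟨Nat.card (N ⊓ (P p : Subgroup G) : Subgroup G) * Nat.card K,
          by rw [← hcard]; ring⟩
      obtain ⟨i, -, he⟩ := (Nat.dvd_prime_pow hpp).1 hdvd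
      exact ⟨i, he⟩
    set T := {i : ℕ | p ^ i ∈ knutsonIndSylow N (P p : Subgroup G)} with hT
    have hTne : T.Nonempty := ⟨_, hmem0⟩
    have hm0 : p ^ sInf T ∈ knutsonIndSylow N (P p : Subgroup G) := Nat.sInf_mem hTne
    have hdvdall : ∀ m ∈ knutsonIndSylow N (P p : Subgroup G), p ^ sInf T ∣ m := by
      intro m hm
      obtain ⟨i, rfl⟩ := hpow m hm
      exact pow_dvd_pow p (Nat.sInf_le (show i ∈ T from hm))
    have hkp : k p = p ^ sInf T :=
      Nat.dvd_antisymm ((hk p hp).1 _ hm0) ((hk p hp).2 _ hdvdall)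
    rw [hkp]; exact hm0
  -- Step C2: d divides ∏ k p
  have d_dvd : d ∣ ∏ p ∈ (Nat.card G).primeFactors, k p := by
    have hm₀ : (Nat.card G) / Nat.card N ∈ knutsonInd N :=
      ⟨⊥, by simp, by rw [Subgroup.card_bot, mul_one, Nat.div_mul_cancel hNn]⟩
    have hdn : d ∣ (Nat.card G) := (hd.1 _ hm₀).trans (Nat.div_dvd_of_dvd hNn)
    have hd0 : d ≠ 0 := by rintro rfl; exact hG0 (Nat.eq_zero_of_zero_dvd hdn)
    conv_lhs => rw [eq_prod_parts hG0 hdn hd0]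
    refine Finset.prod_dvd_prod_of_dvd _ _ fun p hp => ?_
    haveI : Fact p.Prime := ⟨Nat.prime_of_mem_primeFactors hp⟩
    have hpp : p.Prime := Fact.out
    obtain ⟨K', hK'P, hK'N, heq⟩ := kp_mem p hp
    have hK'0 : Nat.card K' ≠ 0 := Nat.card_pos.ne'
    have hK'dvd : Nat.card K' ∣ p ^ (Nat.card G).factorization p := by
      rw [← (P p).card_eq_multiplicity]
      exact ⟨k p * Nat.card (N ⊓ (P p : Subgroup G) : Subgroup G), by rw [← heq]; ring⟩
    obtain ⟨c, -, hc⟩ := (Nat.dvd_prime_pow hpp).1 hK'dvd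
    have hkdvd : k p ∣ p ^ (Nat.card G).factorization p := by
      rw [← (P p).card_eq_multiplicity]
      exact ⟨Nat.card (N ⊓ (P p : Subgroup G) : Subgroup G) * Nat.card K',
        by rw [← heq]; ring⟩
    obtain ⟨e, -, he⟩ := (Nat.dvd_prime_pow hpp).1 hkdvd
    have hsum : e + (Nat.card N).factorization p + c = (Nat.card G).factorization p := by
      rw [card_inf_sylow N (P p), (P p).card_eq_multiplicity, he, hc,
        ← pow_add, ← pow_add] at heq
      exact Nat.pow_right_injective hpp.two_le heq
    have hNK : Nat.card N * Nat.card K' ∣ (Nat.card G) := by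
      rw [← Nat.factorization_le_iff_dvd (mul_ne_zero hN0 hK'0) hG0]
      intro q
      rw [Nat.factorization_mul hN0 hK'0, Finsupp.add_apply, hc,
        hpp.factorization_pow, Finsupp.single_apply]
      by_cases hq : p = q
      · subst hq
        simp only [eq_self_iff_true, if_true]
        omega
      · rw [if_neg hq, add_zero]
        exact ((Nat.factorization_le_iff_dvd hN0 hG0).2 hNn) q
    set m := (Nat.card G) / (Nat.card N * Nat.card K') with hmdef
    have hmeq : m * Nat.card N * Nat.card K' = (Nat.card G) := by
      rw [mul_assoc, Nat.div_mul_cancel hNK]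
    have hdm : d ∣ m := hd.1 m ⟨K', hK'N, hmeq⟩
    have hm0 : m ≠ 0 := by
      rintro h; rw [h, zero_mul, zero_mul] at hmeq; exact hG0 hmeq.symm
    have hcc : (Nat.card K').factorization p = c := by
      rw [hc, hpp.factorization_pow]; simp
    have hvm : m.factorization p = e := by
      have h1 := congrArg Nat.factorization hmeq
      rw [Nat.factorization_mul (mul_ne_zero hm0 hN0) hK'0,
        Nat.factorization_mul hm0 hN0] at h1
      have h2 := congrArg (fun f : ℕ →₀ ℕ => f p) h1
      simp only [Finsupp.add_apply] at h2
      rw [hcc] at h2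
      omega
    rw [he, ← hvm]
    exact pow_dvd_pow p (((Nat.factorization_le_iff_dvd hd0 hm0).2 hdm) p)
  refine ⟨Nat.dvd_antisymm d_dvd (hd.2 _ prod_dvd), ?_⟩
  intro p hp P₁ P₂ a b ha hb
  haveI : Fact p.Prime := ⟨Nat.prime_of_mem_primeFactors hp⟩
  have hset : knutsonIndSylow N (P₁ : Subgroup G) = knutsonIndSylow N (P₂ : Subgroup G) :=
    le_antisymm (indSylow_subset N P₁ P₂) (indSylow_subset N P₂ P₁)
  exact Nat.dvd_antisymm (hb.2 a (hset ▸ ha.1)) (ha.2 b (hset.symm ▸ hb.1))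
end

section
/- Let G be a finite group and N a normal subgroup of G. Then the Knutson subindex 𝒦(G,N), the greatest common divisor of Ind(G,N), equals 1 if and only if for every prime p and every Sylow p-subgroup P of G, N∩P has a complement in P (i.e. all the extensions 1 → N∩P → P → P/(N∩P) → 1 split). -/
open Subgroup Pointwise

/-- Product formula: if `K ⊓ N = ⊥` and `N` is normal, then `|N|·|K| = |N ⊔ K|`. -/
lemma knutson_aux_card_sup {G : Type*} [Group G] (N K : Subgroup G) [N.Normal]
    (h : K ⊓ N = ⊥) : Nat.card N * Nat.card K = Nat.card (N ⊔ K : Subgroup G) := by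
  have h1 := Subgroup.relIndex_mul_relIndex ⊥ N (N ⊔ K) bot_le le_sup_left
  rw [Subgroup.relIndex_bot_left, Subgroup.relIndex_bot_left] at h1
  rw [← h1]
  congr 1
  rw [Subgroup.relIndex_sup_left, ← Subgroup.inf_relIndex_right N K, inf_comm, h,
    Subgroup.relIndex_bot_left]

lemma knutson_aux_mem_ind {G : Type*} [Group G] [Finite G] (N K : Subgroup G) [N.Normal]
    (h : K ⊓ N = ⊥) :
    (N ⊔ K).index * Nat.card N * Nat.card K = Nat.card G := by
  rw [mul_assoc, knutson_aux_card_sup N K h, Subgroup.index_mul_card]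

/-- The cardinality of the intersection of a normal subgroup with a Sylow `p`-subgroup. -/
lemma knutson_aux_card_inf {G : Type*} [Group G] [Finite G] {p : ℕ} [Fact p.Prime]
    (N : Subgroup G) [N.Normal] (P : Sylow p G) :
    Nat.card (N ⊓ (P : Subgroup G) : Subgroup G) = p ^ (Nat.card N).factorization p := by
  have hp : p.Prime := Fact.out
  have Q : Sylow p ↥N := Nonempty.some inferInstance
  set Q' : Subgroup G := (Q : Subgroup ↥N).map N.subtype with hQ'
  have hQ'card : Nat.card Q' = p ^ (Nat.card N).factorization p := by
    rw [← Q.card_eq_multiplicity]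
    exact (Nat.card_congr ((Q : Subgroup ↥N).equivMapOfInjective N.subtype
      N.subtype_injective).toEquiv).symm
  have hQ'p : IsPGroup p Q' := Q.2.map _
  have hQ'N : Q' ≤ N := Subgroup.map_subtype_le _
  obtain ⟨P₀, hP₀⟩ := hQ'p.exists_le_sylow
  obtain ⟨g, hg⟩ := MulAction.exists_smul_eq G P₀ P
  have h1 : MulAut.conj g • Q' ≤ N ⊓ (P : Subgroup G) := by
    refine le_inf ?_ ?_
    · conv_rhs => rw [← Subgroup.Normal.conj_smul_eq_self g N]
      exact Subgroup.pointwise_smul_le_pointwise_smul_iff.mpr hQ'N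
    · have h2 : MulAut.conj g • (P₀ : Subgroup G) ≤ (P : Subgroup G) := by
        rw [← hg]; exact le_rfl
      exact (Subgroup.pointwise_smul_le_pointwise_smul_iff.mpr hP₀).trans h2
  have hle : p ^ (Nat.card N).factorization p ∣ Nat.card (N ⊓ (P : Subgroup G) : Subgroup G) := by
    have h3 : Nat.card (MulAut.conj g • Q' : Subgroup G) = Nat.card Q' :=
      (Nat.card_congr (Subgroup.equivSMul (MulAut.conj g) Q').toEquiv).symm
    rw [← hQ'card, ← h3]
    exact Subgroup.card_dvd_of_le h1
  have hpg : IsPGroup p (N ⊓ (P : Subgroup G) : Subgroup G) := P.2.to_inf_right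
  obtain ⟨k, hk⟩ := IsPGroup.iff_card.mp hpg
  have hdvd : Nat.card (N ⊓ (P : Subgroup G) : Subgroup G) ∣ Nat.card N :=
    Subgroup.card_dvd_of_le inf_le_left
  have hkle : k ≤ (Nat.card N).factorization p := by
    rw [hk] at hdvd
    exact (Nat.Prime.pow_dvd_iff_le_factorization hp Nat.card_pos.ne').mp hdvd
  exact Nat.dvd_antisymm (hk ▸ pow_dvd_pow p hkle) hle

/-- From a complement of `N ⊓ P` in `P`, produce an element of `Ind(G,N)` prime to `p`. -/
lemma knutson_aux_of_complement {G : Type*} [Group G] [Finite G] {p : ℕ} [Fact p.Prime]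
    (N : Subgroup G) [N.Normal] (P : Sylow p G) (K : Subgroup G)
    (hKN : K ⊓ N = ⊥)
    (hcard : Nat.card K * Nat.card (N ⊓ (P : Subgroup G) : Subgroup G)
      = Nat.card (P : Subgroup G)) :
    ∃ m ∈ knutsonInd N, ¬ p ∣ m := by
  have hp : p.Prime := Fact.out
  have hn0 : Nat.card G ≠ 0 := Nat.card_pos.ne'
  refine ⟨(N ⊔ K).index, ⟨K, hKN, knutson_aux_mem_ind N K hKN⟩, ?_⟩
  intro hdvd
  obtain ⟨m', hm'⟩ := hdvd
  have hNP := knutson_aux_card_inf N P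
  have hPc : Nat.card (P : Subgroup G) = p ^ (Nat.card G).factorization p :=
    P.card_eq_multiplicity
  obtain ⟨c, hc⟩ := Nat.ordProj_dvd (Nat.card N) p
  have hk : Nat.card K * p ^ (Nat.card N).factorization p
      = p ^ (Nat.card G).factorization p := by rw [← hNP, hcard, hPc]
  have : p ^ ((Nat.card G).factorization p + 1) ∣ Nat.card G := by
    refine ⟨m' * c, ?_⟩
    conv_lhs => rw [← knutson_aux_mem_ind N K hKN]
    rw [hm', hc, pow_succ, ← hk]
    ring
  exact Nat.pow_succ_factorization_not_dvd hn0 hp this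

/-- From an element of `Ind(G,N)` prime to `p`, produce a complement of `N ⊓ P` in `P`. -/
lemma knutson_aux_to_complement {G : Type*} [Group G] [Finite G] {p : ℕ} [Fact p.Prime]
    (N : Subgroup G) [N.Normal] (P : Sylow p G) {m : ℕ} (hm : m ∈ knutsonInd N)
    (hpm : ¬ p ∣ m) :
    ∃ K : Subgroup G, K ≤ (P : Subgroup G) ∧ K ⊓ N = ⊥ ∧
      Nat.card K * Nat.card (N ⊓ (P : Subgroup G) : Subgroup G)
        = Nat.card (P : Subgroup G) := by
  have hp : p.Prime := Fact.out
  obtain ⟨K, hKN, hmeq⟩ := hm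
  have Q : Sylow p ↥K := Nonempty.some inferInstance
  set K' : Subgroup G := (Q : Subgroup ↥K).map K.subtype with hK'def
  have hK'card : Nat.card K' = p ^ (Nat.card K).factorization p := by
    rw [← Q.card_eq_multiplicity]
    exact (Nat.card_congr ((Q : Subgroup ↥K).equivMapOfInjective K.subtype
      K.subtype_injective).toEquiv).symm
  have hK'K : K' ≤ K := Subgroup.map_subtype_le _
  have hK'p : IsPGroup p K' := Q.2.map _
  obtain ⟨P₀, hP₀⟩ := hK'p.exists_le_sylow
  obtain ⟨g, hg⟩ := MulAction.exists_smul_eq G P₀ P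
  refine ⟨MulAut.conj g • K', ?_, ?_, ?_⟩
  · have h2 : MulAut.conj g • (P₀ : Subgroup G) ≤ (P : Subgroup G) := by
      rw [← hg]; exact le_rfl
    exact (Subgroup.pointwise_smul_le_pointwise_smul_iff.mpr hP₀).trans h2
  · have h5 : K' ⊓ N = ⊥ := le_bot_iff.mp (hKN ▸ inf_le_inf_right N hK'K)
    conv_lhs => rw [← Subgroup.Normal.conj_smul_eq_self g N]
    rw [← Subgroup.smul_inf, h5]
    ext x
    simp [Subgroup.mem_pointwise_smul_iff_inv_smul_mem]
  · have h3 : Nat.card (MulAut.conj g • K' : Subgroup G) = Nat.card K' :=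
      (Nat.card_congr (Subgroup.equivSMul (MulAut.conj g) K').toEquiv).symm
    have hm0 : m ≠ 0 := by
      rintro rfl; simp at hmeq; exact Nat.card_pos.ne' hmeq.symm
    have hN0 : Nat.card N ≠ 0 := Nat.card_pos.ne'
    have hK0 : Nat.card K ≠ 0 := Nat.card_pos.ne'
    have hfact : (Nat.card K).factorization p + (Nat.card N).factorization p
        = (Nat.card G).factorization p := by
      have := congrArg (fun x => x.factorization p) hmeq
      simp only [Nat.factorization_mul (mul_ne_zero hm0 hN0) hK0,
        Nat.factorization_mul hm0 hN0, Finsupp.add_apply,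
        Nat.factorization_eq_zero_of_not_dvd hpm] at this
      omega
    rw [h3, hK'card, knutson_aux_card_inf N P, P.card_eq_multiplicity, ← pow_add, hfact]

/-- Let `G` be a finite group and `N ⊴ G`. The Knutson subindex
`𝒦(G,N) = gcd(Ind(G,N))` equals `1` if and only if for every prime `p` and every
Sylow `p`-subgroup `P` of `G`, the subgroup `N ∩ P` has a complement in `P`
(i.e. all the extensions `1 → N∩P → P → P/(N∩P) → 1` split). -/
theorem knutson_subindex_eq_one_iff_sylow_split {G : Type*} [Group G] [Finite G]
    (N : Subgroup G) [N.Normal] :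
    (∀ d : ℕ, IsGCDOf (knutsonInd N) d → d = 1) ↔
      ∀ p : ℕ, p.Prime → ∀ P : Sylow p G,
        ∃ K : Subgroup G, K ≤ (P : Subgroup G) ∧ K ⊓ N = ⊥ ∧
          Nat.card K * Nat.card (N ⊓ (P : Subgroup G) : Subgroup G) =
            Nat.card (P : Subgroup G) := by
  classical
  have hn0 : Nat.card G ≠ 0 := Nat.card_pos.ne'
  have hSdvd : ∀ m ∈ knutsonInd N, m ∣ Nat.card G := by
    rintro m ⟨K, -, hm⟩
    exact ⟨Nat.card N * Nat.card K, by rw [← hm, mul_assoc]⟩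
  -- the gcd exists
  set d₀ : ℕ := ((Nat.card G).divisors.filter (· ∈ knutsonInd N)).gcd id with hd₀
  have hd₀gcd : IsGCDOf (knutsonInd N) d₀ := by
    constructor
    · intro m hm
      refine Finset.gcd_dvd ?_
      simp only [Finset.mem_filter, Nat.mem_divisors]
      exact ⟨⟨hSdvd m hm, hn0⟩, hm⟩
    · intro c hc
      refine Finset.dvd_gcd fun m hm => ?_
      simp only [Finset.mem_filter] at hm
      exact hc m hm.2
  constructor
  · intro h p hp P
    haveI : Fact p.Prime := ⟨hp⟩
    have hd1 : d₀ = 1 := h d₀ hd₀gcd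
    have hex : ∃ m ∈ knutsonInd N, ¬ p ∣ m := by
      by_contra hcon
      push_neg at hcon
      have := hd₀gcd.2 p hcon
      rw [hd1, Nat.dvd_one] at this
      exact hp.one_lt.ne' this
    obtain ⟨m, hmS, hpm⟩ := hex
    exact knutson_aux_to_complement N P hmS hpm
  · intro h d hd
    have hbot : N.index ∈ knutsonInd N :=
      ⟨⊥, bot_inf_eq N, by simp [Subgroup.index_mul_card]⟩
    have hdne : d ≠ 0 := by
      intro hd0
      have := hd.1 _ hbot
      rw [hd0, Nat.zero_dvd] at this
      exact Subgroup.index_ne_zero_of_finite this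
    by_contra hd1
    obtain ⟨p, hp, hpd⟩ := Nat.exists_prime_and_dvd hd1
    haveI : Fact p.Prime := ⟨hp⟩
    have P : Sylow p G := Nonempty.some inferInstance
    obtain ⟨K, hKP, hKN, hcard⟩ := h p hp P
    obtain ⟨m, hmS, hpm⟩ := knutson_aux_of_complement N P K hKN hcard
    exact hpm (hpd.trans (hd.1 m hmS))
end
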